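/- For β ≥ (1+√5)/2, the number 1 is the smallest positive element of Z_{-β}. -/

import Mathlib

/-- The `(-β)`-transformation `x ↦ -βx - ⌊β/(β+1) - βx⌋`. -/
noncomputable def Tm (β : ℝ) (x : ℝ) : ℝ := -β * x - ⌊β / (β + 1) - β * x⌋

/-- The set of `(-β)`-integers `Z_{-β} = ⋃_{n≥0} (-β)^n T_{-β}^{-n}(0)`. -/
noncomputable def Zm (β : ℝ) : Set ℝ :=
  {x | ∃ n : ℕ, x / (-β) ^ n ∈ Set.Ico (-β / (β + 1)) (1 / (β + 1)) ∧
    (Tm β)^[n] (x / (-β) ^ n) = 0}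

lemma Tm_mem (β : ℝ) (hβ : 1 < β) (x : ℝ) :
    -β / (β + 1) ≤ Tm β x ∧ Tm β x < 1 / (β + 1) := by
  have hb1 : (0:ℝ) < β + 1 := by linarith
  have hfr : Tm β x = Int.fract (β / (β + 1) - β * x) - β / (β + 1) := by
    unfold Tm Int.fract; ring
  have h1 := Int.fract_nonneg (β / (β + 1) - β * x)
  have h2 := Int.fract_lt_one (β / (β + 1) - β * x)
  have hs : 1 / (β + 1) + β / (β + 1) = 1 := by
    rw [← add_div]; field_simp; ring
  constructor
  · rw [hfr, neg_div]; linarith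
  · rw [hfr]; linarith

lemma key (β : ℝ) (hβ : 1 < β) (hβ2 : β + 1 ≤ β ^ 2) :
    ∀ n (z : ℝ), -β / (β + 1) ≤ z → z < 1 / (β + 1) → (Tm β)^[n] z = 0 →
      0 < (-β) ^ n * z → 1 ≤ (-β) ^ n * z := by
  intro n
  induction n with
  | zero =>
    intro z _ _ h0 hpos
    simp only [Function.iterate_zero, id] at h0
    simp [h0] at hpos
  | succ n ih =>
    intro z hl hu h0 hpos
    have hb0 : (0:ℝ) < β := by linarith
    have hb1 : (0:ℝ) < β + 1 := by linarith
    set d : ℤ := ⌊β / (β + 1) - β * z⌋ with hd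
    have hTz : Tm β z = -β * z - d := rfl
    have hmem := Tm_mem β hβ z
    have h0' : (Tm β)^[n] (Tm β z) = 0 := by
      rw [← Function.iterate_succ_apply]; exact h0
    have hupos : 0 < β / (β + 1) - β * z := by
      have h := mul_lt_mul_of_pos_left hu hb0
      rw [mul_one_div] at h; linarith
    have hd0 : 0 ≤ d := Int.floor_nonneg.mpr (le_of_lt hupos)
    rcases eq_or_lt_of_le hd0 with hdz | hd1
    · -- d = 0
      have hz' : Tm β z = -β * z := by rw [hTz, ← hdz]; simp
      have heq : (-β) ^ (n + 1) * z = (-β) ^ n * Tm β z := by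
        rw [hz']; ring
      rw [heq] at hpos ⊢
      exact ih _ hmem.1 hmem.2 h0' hpos
    · -- 1 ≤ d
      have hd1' : (1:ℝ) ≤ (d:ℝ) := by exact_mod_cast hd1
      have hflo : (d:ℝ) ≤ β / (β + 1) - β * z := Int.floor_le _
      have hdiveq : β / (β + 1) - 1 = -(1 / (β + 1)) := by field_simp; ring
      have hzneg : 1 ≤ β * (β + 1) * (-z) := by
        have h : β * z ≤ β / (β + 1) - 1 := by linarith
        rw [hdiveq] at h
        have h2 : (β + 1) * (β * z) ≤ (β + 1) * (-(1 / (β + 1))) :=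
          mul_le_mul_of_nonneg_left h (le_of_lt hb1)
        have h3 : (β + 1) * (-(1 / (β + 1))) = -1 := by field_simp
        nlinarith
      have hzlt : z < 0 := by nlinarith
      match n with
      | 0 =>
        simp only [Function.iterate_zero, id] at h0'
        have hdz : -β * z = (d:ℝ) := by rw [hTz] at h0'; linarith
        have hfin : (-β) ^ (0 + 1) * z = (d:ℝ) := by rw [pow_one]; linarith
        rw [hfin]; exact hd1'
      | 1 =>
        exfalso
        have h : (-β) ^ (1 + 1) * z < 0 := by
          have : (-β) ^ (1 + 1) = β ^ 2 := by ring
          rw [this]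
          exact mul_neg_of_pos_of_neg (by positivity) hzlt
        linarith
      | (m + 2) =>
        have hc0 : 0 < -z := by linarith
        rcases Nat.even_or_odd (m + 2 + 1) with he | ho
        · exfalso
          rw [he.neg_pow] at hpos
          have : β ^ (m + 2 + 1) * z < 0 :=
            mul_neg_of_pos_of_neg (by positivity) hzlt
          linarith
        · rw [ho.neg_pow] at hpos ⊢
          have hy : -β ^ (m + 2 + 1) * z = β ^ (m + 2 + 1) * (-z) := by ring
          rw [hy]
          have hpow : β ^ 3 ≤ β ^ (m + 2 + 1) :=
            pow_le_pow_right₀ (le_of_lt hβ) (by omega)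
          have h5 : β ^ 3 * (-z) ≤ β ^ (m + 2 + 1) * (-z) :=
            mul_le_mul_of_nonneg_right hpow (le_of_lt hc0)
          have h6 : 1 ≤ β ^ 3 * (-z) := by
            nlinarith [mul_nonneg (mul_nonneg (le_of_lt hb0) (le_of_lt hc0))
              (sub_nonneg.mpr hβ2)]
          linarith

theorem stmt_14 (β : ℝ) (hβ : (1 + Real.sqrt 5) / 2 ≤ β) :
    IsLeast (Zm β ∩ Set.Ioi (0 : ℝ)) 1 := by
  have hs : Real.sqrt 5 ^ 2 = 5 := Real.sq_sqrt (by norm_num)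
  have hsnn : 0 ≤ Real.sqrt 5 := Real.sqrt_nonneg 5
  have hs2 : (2:ℝ) ≤ Real.sqrt 5 := by nlinarith
  have hβ1 : 1 < β := by nlinarith
  have hβ2 : β + 1 ≤ β ^ 2 := by nlinarith
  have hb0 : (0:ℝ) < β := by linarith
  have hb1 : (0:ℝ) < β + 1 := by linarith
  constructor
  · constructor
    · refine ⟨1, ⟨?_, ?_⟩, ?_⟩
      · rw [pow_one, div_neg, neg_div, neg_le_neg_iff, div_le_div_iff₀ hb0 hb1]
        nlinarith
      · rw [pow_one, div_neg]
        have h1 : (0:ℝ) < 1 / (β + 1) := by positivity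
        have h2 : (0:ℝ) < 1 / β := by positivity
        linarith
      · rw [pow_one, div_neg, Function.iterate_one]
        unfold Tm
        have e1 : -β * -(1 / β) = 1 := by field_simp
        have e2 : β / (β + 1) - β * -(1 / β) = β / (β + 1) + 1 := by
          field_simp; ring
        rw [e1, e2]
        have e3 : ⌊β / (β + 1) + 1⌋ = ⌊β / (β + 1)⌋ + 1 := by
          exact_mod_cast Int.floor_add_intCast (β / (β + 1)) 1
        have e4 : ⌊β / (β + 1)⌋ = 0 := by
          rw [Int.floor_eq_zero_iff]
          constructor
          · positivity
          · rw [div_lt_one hb1]; linarith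
        rw [e3, e4]
        norm_num
    · norm_num
  · rintro y ⟨⟨n, ⟨hl, hu⟩, h0⟩, hy0⟩
    have hne : (-β) ^ n ≠ 0 := pow_ne_zero _ (by intro h; rw [neg_eq_zero] at h; linarith)
    have hyz : y = (-β) ^ n * (y / (-β) ^ n) := by field_simp
    have hk := key β hβ1 hβ2 n (y / (-β) ^ n) hl hu h0 (by rw [← hyz]; exact hy0)
    rw [← hyz] at hk; exact hk
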